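/- Let Ω ⊆ ℝ^n be Lebesgue measurable with 0 < |Ω| < ∞, let E be a finite-dimensional real normed space, let κ ≥ 1 and Q : E → ℝ satisfy κ⁻¹·‖M‖² ≤ Q(M) ≤ κ·‖M‖² for all M ∈ E. Let ψ : [0,1] → [0,∞) be nonincreasing with ψ(1) = 0, fix α > 0 and ε > 0 with α·ε ≤ 1, and let v : Ω → ℝ be measurable with α·ε ≤ v(x) ≤ 1 a.e. and e : Ω → E measurable. Set W := ∫_Ω v·Q(e) dx + ε⁻¹·∫_Ω ψ(v) dx. Then for every λ ∈ (0,1) with ψ(λ) > 0 one has ∫_Ω ‖e(x)‖ dx ≤ √(κ·|Ω|/λ)·√W + ( √κ / (2·√(α·ψ(λ))) )·W. In particular, if W < ∞ then ‖e‖ is integrable on Ω. -/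

import Mathlib

open MeasureTheory Filter Set
open scoped ENNReal

lemma aux_cs {X : Type*} [MeasurableSpace X] (μ : Measure X) (g : X → ℝ≥0∞)
    (hg : AEMeasurable g μ) :
    ∫⁻ x, g x ∂μ ≤ (μ univ) ^ (1/2 : ℝ) * (∫⁻ x, g x ^ (2:ℝ) ∂μ) ^ (1/2 : ℝ) := by
  have hpq : (2:ℝ).HolderConjugate 2 := by rw [Real.holderConjugate_iff]; norm_num
  have := ENNReal.lintegral_mul_le_Lp_mul_Lq μ hpq aemeasurable_const hg (f := fun _ => 1)
  simpa using this

lemma aux_amgm {x y : ℝ} (hx : 0 ≤ x) (hy : 0 ≤ y) : 2 * Real.sqrt (x * y) ≤ x + y := by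
  have h := two_mul_le_add_sq (Real.sqrt x) (Real.sqrt y)
  rw [Real.sqrt_mul hx]
  nlinarith [Real.sq_sqrt hx, Real.sq_sqrt hy]

lemma aux_pt {κ α ε ψl ψv vx r q : ℝ} (hκ : 1 ≤ κ) (hα : 0 < α) (hε : 0 < ε)
    (hψl : 0 < ψl) (hr : 0 ≤ r) (hq1 : κ⁻¹ * r ^ 2 ≤ q) (hvlow : α * ε ≤ vx)
    (hψv : ψl ≤ ψv) :
    r ≤ Real.sqrt κ / (2 * Real.sqrt (α * ψl)) * (vx * q + ε⁻¹ * ψv) := by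
  have hκ0 : (0:ℝ) < κ := lt_of_lt_of_le one_pos hκ
  have hq0 : 0 ≤ q := le_trans (by positivity) hq1
  have hvx0 : 0 < vx := lt_of_lt_of_le (by positivity) hvlow
  have h1 : α * ε * (κ⁻¹ * r ^ 2) ≤ vx * q :=
    mul_le_mul hvlow hq1 (by positivity) hvx0.le
  have h2 : ε⁻¹ * ψl ≤ ε⁻¹ * ψv := by
    apply mul_le_mul_of_nonneg_left hψv (by positivity)
  have h3 : (α * ε * (κ⁻¹ * r ^ 2)) * (ε⁻¹ * ψl) ≤ (vx * q) * (ε⁻¹ * ψv) :=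
    mul_le_mul h1 h2 (by positivity) (by positivity)
  have hkey : (α * ε * (κ⁻¹ * r ^ 2)) * (ε⁻¹ * ψl) = (α * ψl / κ) * r ^ 2 := by
    field_simp
  have h4 : Real.sqrt (α * ψl / κ) * r ≤ Real.sqrt ((vx * q) * (ε⁻¹ * ψv)) := by
    have := Real.sqrt_le_sqrt (le_of_eq_of_le hkey.symm h3 : (α * ψl / κ) * r ^ 2 ≤ _)
    calc Real.sqrt (α * ψl / κ) * r = Real.sqrt ((α * ψl / κ) * r ^ 2) := by
          rw [Real.sqrt_mul (by positivity), Real.sqrt_sq hr]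
      _ ≤ _ := this
  have hψv0 : 0 ≤ ψv := le_trans hψl.le hψv
  have h5 : 2 * (Real.sqrt (α * ψl / κ) * r) ≤ vx * q + ε⁻¹ * ψv := by
    have := aux_amgm (x := vx * q) (y := ε⁻¹ * ψv) (by positivity) (by positivity)
    nlinarith
  have hsq : Real.sqrt (α * ψl / κ) = Real.sqrt (α * ψl) / Real.sqrt κ :=
    Real.sqrt_div (by positivity) κ
  have hc : 0 < Real.sqrt (α * ψl) := Real.sqrt_pos.2 (by positivity)
  have hk : 0 < Real.sqrt κ := Real.sqrt_pos.2 hκ0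
  rw [hsq] at h5
  have h6 := mul_le_mul_of_nonneg_left h5
    (le_of_lt (by positivity : 0 < Real.sqrt κ / (2 * Real.sqrt (α * ψl))))
  calc r = Real.sqrt κ / (2 * Real.sqrt (α * ψl)) *
        (2 * (Real.sqrt (α * ψl) / Real.sqrt κ * r)) := by field_simp
    _ ≤ _ := h6

theorem stmt_7 {n : ℕ} (Ω : Set (EuclideanSpace ℝ (Fin n)))
    (hΩm : MeasurableSet Ω) (hΩpos : 0 < volume Ω) (hΩfin : volume Ω ≠ ⊤)
    {E : Type*} [NormedAddCommGroup E] [NormedSpace ℝ E] [FiniteDimensional ℝ E]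
    [MeasurableSpace E] [BorelSpace E]
    (κ : ℝ) (hκ : 1 ≤ κ)
    (Q : E → ℝ) (hQ : ∀ M : E, κ⁻¹ * ‖M‖ ^ 2 ≤ Q M ∧ Q M ≤ κ * ‖M‖ ^ 2)
    (ψ : ℝ → ℝ) (hψmono : AntitoneOn ψ (Icc 0 1)) (hψ1 : ψ 1 = 0)
    (hψnn : ∀ t ∈ Icc (0:ℝ) 1, 0 ≤ ψ t)
    (α ε : ℝ) (hα : 0 < α) (hε : 0 < ε) (hαε : α * ε ≤ 1)
    (v : EuclideanSpace ℝ (Fin n) → ℝ) (hv : Measurable v)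
    (hv' : ∀ᵐ x ∂(volume.restrict Ω), α * ε ≤ v x ∧ v x ≤ 1)
    (e : EuclideanSpace ℝ (Fin n) → E) (he : Measurable e)
    (W : ℝ≥0∞)
    (hW : W = (∫⁻ x in Ω, ENNReal.ofReal (v x * Q (e x)))
        + ENNReal.ofReal ε⁻¹ * ∫⁻ x in Ω, ENNReal.ofReal (ψ (v x))) :
    (∀ l ∈ Ioo (0:ℝ) 1, 0 < ψ l →
      (∫⁻ x in Ω, (‖e x‖₊ : ℝ≥0∞))
        ≤ ENNReal.ofReal (Real.sqrt (κ * (volume Ω).toReal / l)) * W ^ (1/2 : ℝ)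
          + ENNReal.ofReal (Real.sqrt κ / (2 * Real.sqrt (α * ψ l))) * W)
    ∧ (W ≠ ⊤ → IntegrableOn (fun x => ‖e x‖) Ω) := by
  have hκ0 : (0:ℝ) < κ := lt_of_lt_of_le one_pos hκ
  set μ := volume.restrict Ω with hμ
  set I₁ := ∫⁻ x in Ω, ENNReal.ofReal (v x * Q (e x)) with hI₁
  have hI₁W : I₁ ≤ W := by rw [hW]; exact le_add_right le_rfl
  -- the square norm pointwise conversion
  have hnsq : ∀ x, ((‖e x‖₊ : ℝ≥0∞)) ^ (2:ℝ) = ENNReal.ofReal (‖e x‖ ^ 2) := by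
    intro x
    rw [← enorm_eq_nnnorm, ← ofReal_norm, show (2:ℝ) = ((2:ℕ):ℝ) by norm_num,
      ENNReal.rpow_natCast, ENNReal.ofReal_pow (norm_nonneg _)]
  -- square bound on sub-measures
  have sqbound : ∀ (ν : Measure (EuclideanSpace ℝ (Fin n))), ν ≤ μ → ∀ c : ℝ, 0 < c →
      (∀ᵐ x ∂ν, c ≤ v x) →
      ∫⁻ x, ((‖e x‖₊ : ℝ≥0∞)) ^ (2:ℝ) ∂ν ≤ ENNReal.ofReal (κ / c) * I₁ := by
    intro ν hν c hc hcv
    have step : ∫⁻ x, ((‖e x‖₊ : ℝ≥0∞)) ^ (2:ℝ) ∂ν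
        ≤ ∫⁻ x, ENNReal.ofReal (κ / c) * ENNReal.ofReal (v x * Q (e x)) ∂ν := by
      refine lintegral_mono_ae (hcv.mono fun x hx => ?_)
      rw [hnsq x, ← ENNReal.ofReal_mul (by positivity)]
      apply ENNReal.ofReal_le_ofReal
      have hq := (hQ (e x)).1
      have hq0 : 0 ≤ Q (e x) := le_trans (by positivity) hq
      have h1 : ‖e x‖ ^ 2 ≤ κ * Q (e x) := by
        calc ‖e x‖ ^ 2 = κ * (κ⁻¹ * ‖e x‖ ^ 2) := by field_simp
          _ ≤ κ * Q (e x) := by nlinarith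
      calc ‖e x‖ ^ 2 ≤ κ * Q (e x) := h1
        _ = (κ / c) * (c * Q (e x)) := by field_simp
        _ ≤ (κ / c) * (v x * Q (e x)) := by
            apply mul_le_mul_of_nonneg_left (by nlinarith) (by positivity)
    rw [lintegral_const_mul' _ _ ENNReal.ofReal_ne_top] at step
    refine step.trans (mul_le_mul_right ?_ _)
    exact lintegral_mono' hν le_rfl
  -- Cauchy-Schwarz helper combined
  have hemeas : ∀ ν : Measure (EuclideanSpace ℝ (Fin n)),
      AEMeasurable (fun x => (‖e x‖₊ : ℝ≥0∞)) ν :=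
    fun ν => (he.nnnorm.coe_nnreal_ennreal).aemeasurable
  constructor
  · intro l hl hψl
    set S := {x | l < v x} with hSdef
    have hS : MeasurableSet S := measurableSet_lt measurable_const hv
    set C := Real.sqrt κ / (2 * Real.sqrt (α * ψ l)) with hC
    have hC0 : 0 ≤ C := by positivity
    -- split
    have hsplit : (∫⁻ x in Ω, (‖e x‖₊ : ℝ≥0∞))
        = (∫⁻ x in S, (‖e x‖₊ : ℝ≥0∞) ∂μ) + ∫⁻ x in Sᶜ, (‖e x‖₊ : ℝ≥0∞) ∂μ :=
      (lintegral_add_compl _ hS).symm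
    -- A-side
    have hA : (∫⁻ x in S, (‖e x‖₊ : ℝ≥0∞) ∂μ)
        ≤ ENNReal.ofReal (Real.sqrt (κ * (volume Ω).toReal / l)) * W ^ (1/2 : ℝ) := by
      have cs := aux_cs (μ.restrict S) _ (hemeas _)
      have hsq : ∫⁻ x, ((‖e x‖₊ : ℝ≥0∞)) ^ (2:ℝ) ∂(μ.restrict S)
          ≤ ENNReal.ofReal (κ / l) * I₁ := by
        refine sqbound _ Measure.restrict_le_self l hl.1 ?_
        exact (ae_restrict_mem hS).mono fun x hx => le_of_lt hx
      have hμS : (μ.restrict S) univ ≤ volume Ω := by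
        rw [Measure.restrict_apply_univ, hμ, Measure.restrict_apply hS]
        exact measure_mono inter_subset_right
      calc (∫⁻ x in S, (‖e x‖₊ : ℝ≥0∞) ∂μ)
          ≤ ((μ.restrict S) univ) ^ (1/2:ℝ) *
            (∫⁻ x, ((‖e x‖₊ : ℝ≥0∞)) ^ (2:ℝ) ∂(μ.restrict S)) ^ (1/2:ℝ) := cs
        _ ≤ (volume Ω) ^ (1/2:ℝ) * (ENNReal.ofReal (κ / l) * W) ^ (1/2:ℝ) := by
            gcongr
            exact hsq.trans (mul_le_mul_right hI₁W _)
        _ = ENNReal.ofReal (Real.sqrt (κ * (volume Ω).toReal / l)) * W ^ (1/2 : ℝ) := by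
            rw [ENNReal.mul_rpow_of_nonneg _ _ (by norm_num), ← mul_assoc]
            congr 1
            rw [← ENNReal.ofReal_toReal hΩfin,
              ENNReal.ofReal_rpow_of_nonneg ENNReal.toReal_nonneg (by norm_num),
              ENNReal.ofReal_rpow_of_nonneg (div_nonneg hκ0.le hl.1.le) (by norm_num),
              ← ENNReal.ofReal_mul (by positivity)]
            congr 1
            rw [← Real.sqrt_eq_rpow, ← Real.sqrt_eq_rpow,
              ← Real.sqrt_mul ENNReal.toReal_nonneg]
            congr 1
            rw [ENNReal.toReal_ofReal ENNReal.toReal_nonneg]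
            ring
    -- B-side
    have hB : (∫⁻ x in Sᶜ, (‖e x‖₊ : ℝ≥0∞) ∂μ) ≤ ENNReal.ofReal C * W := by
      have hvae : ∀ᵐ x ∂(μ.restrict Sᶜ), α * ε ≤ v x ∧ v x ≤ 1 :=
        hv'.filter_mono (ae_mono Measure.restrict_le_self)
      have hmem : ∀ᵐ x ∂(μ.restrict Sᶜ), x ∈ Sᶜ := ae_restrict_mem hS.compl
      -- pointwise bound
      have hpw : ∀ᵐ x ∂(μ.restrict Sᶜ), (‖e x‖₊ : ℝ≥0∞)
          ≤ ENNReal.ofReal C * (ENNReal.ofReal (v x * Q (e x))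
            + ENNReal.ofReal ε⁻¹ * ENNReal.ofReal (ψ (v x))) := by
        filter_upwards [hvae, hmem] with x hx hxS
        have hvl : v x ≤ l := not_lt.1 hxS
        have hv0 : 0 < v x := lt_of_lt_of_le (by positivity) hx.1
        have hψvx : ψ l ≤ ψ (v x) :=
          hψmono ⟨hv0.le, hx.2⟩ ⟨hl.1.le, hl.2.le⟩ hvl
        have hq := (hQ (e x)).1
        have hq0 : 0 ≤ Q (e x) := le_trans (by positivity) hq
        have hreal : ‖e x‖ ≤ C * (v x * Q (e x) + ε⁻¹ * ψ (v x)) :=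
          aux_pt hκ hα hε hψl (norm_nonneg _) hq hx.1 hψvx
        have hψv0 : 0 ≤ ψ (v x) := le_trans hψl.le hψvx
        calc (‖e x‖₊ : ℝ≥0∞) = ENNReal.ofReal ‖e x‖ :=
              (ofReal_norm _).symm
          _ ≤ ENNReal.ofReal (C * (v x * Q (e x) + ε⁻¹ * ψ (v x))) :=
              ENNReal.ofReal_le_ofReal hreal
          _ = ENNReal.ofReal C * (ENNReal.ofReal (v x * Q (e x))
              + ENNReal.ofReal ε⁻¹ * ENNReal.ofReal (ψ (v x))) := by
              rw [ENNReal.ofReal_mul hC0]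
              congr 1
              rw [ENNReal.ofReal_add (mul_nonneg hv0.le hq0) (mul_nonneg (by positivity) hψv0),
                ENNReal.ofReal_mul (show (0:ℝ) ≤ ε⁻¹ by positivity)]
      -- AEMeasurable of ψ ∘ v
      have hgae : AEMeasurable (fun x => ENNReal.ofReal ε⁻¹
          * ENNReal.ofReal (ψ (v x))) (μ.restrict Sᶜ) := by
        set g : ℝ → ℝ := fun t => ψ (max (α*ε) (min 1 t)) with hg
        have hmm : ∀ t : ℝ, max (α*ε) (min 1 t) ∈ Icc (0:ℝ) 1 := by
          intro t
          constructor
          · exact le_max_of_le_left (by positivity)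
          · exact max_le hαε (min_le_left _ _)
        have hganti : Antitone g := by
          intro s t hst
          exact hψmono (hmm s) (hmm t)
            (max_le_max le_rfl (min_le_min le_rfl hst))
        have hgm : Measurable fun x => ENNReal.ofReal ε⁻¹ * ENNReal.ofReal (g (v x)) :=
          (ENNReal.measurable_ofReal.comp (hganti.measurable.comp hv)).const_mul _
        refine hgm.aemeasurable.congr ?_
        filter_upwards [hvae] with x hx
        have : max (α*ε) (min 1 (v x)) = v x := by
          rw [min_eq_right hx.2, max_eq_right hx.1]
        simp only [g, this]
      calc (∫⁻ x in Sᶜ, (‖e x‖₊ : ℝ≥0∞) ∂μ)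
          ≤ ∫⁻ x, ENNReal.ofReal C * (ENNReal.ofReal (v x * Q (e x))
            + ENNReal.ofReal ε⁻¹ * ENNReal.ofReal (ψ (v x))) ∂(μ.restrict Sᶜ) :=
            lintegral_mono_ae hpw
        _ = ENNReal.ofReal C * ∫⁻ x, (ENNReal.ofReal (v x * Q (e x))
            + ENNReal.ofReal ε⁻¹ * ENNReal.ofReal (ψ (v x))) ∂(μ.restrict Sᶜ) :=
            lintegral_const_mul' _ _ ENNReal.ofReal_ne_top
        _ = ENNReal.ofReal C * ((∫⁻ x, ENNReal.ofReal (v x * Q (e x)) ∂(μ.restrict Sᶜ))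
            + ∫⁻ x, ENNReal.ofReal ε⁻¹ * ENNReal.ofReal (ψ (v x)) ∂(μ.restrict Sᶜ)) := by
            rw [lintegral_add_right' _ hgae]
        _ ≤ ENNReal.ofReal C * W := by
            rw [hW]
            gcongr
            · exact lintegral_mono' Measure.restrict_le_self le_rfl
            · rw [lintegral_const_mul' _ _ ENNReal.ofReal_ne_top]
              exact mul_le_mul_right (lintegral_mono' Measure.restrict_le_self le_rfl) _
    rw [hsplit]
    exact add_le_add hA hB
  · -- integrability
    intro hWfin
    have hsq : ∫⁻ x, ((‖e x‖₊ : ℝ≥0∞)) ^ (2:ℝ) ∂μ ≤ ENNReal.ofReal (κ / (α*ε)) * I₁ :=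
      sqbound μ le_rfl (α*ε) (by positivity) (hv'.mono fun x hx => hx.1)
    have hfin : (∫⁻ x in Ω, (‖e x‖₊ : ℝ≥0∞)) < ⊤ := by
      have cs := aux_cs μ _ (hemeas μ)
      refine lt_of_le_of_lt cs ?_
      have hμuniv : μ univ ≠ ⊤ := by rw [Measure.restrict_apply_univ]; exact hΩfin
      have h2 : (∫⁻ x, ((‖e x‖₊ : ℝ≥0∞)) ^ (2:ℝ) ∂μ) ≠ ⊤ := by
        refine ne_of_lt (lt_of_le_of_lt hsq ?_)
        exact ENNReal.mul_lt_top ENNReal.ofReal_lt_top (lt_of_le_of_lt hI₁W hWfin.lt_top)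
      exact ENNReal.mul_lt_top (ENNReal.rpow_lt_top_of_nonneg (by norm_num) hμuniv)
        (ENNReal.rpow_lt_top_of_nonneg (by norm_num) h2)
    refine ⟨(he.norm).aestronglyMeasurable, ?_⟩
    simpa [HasFiniteIntegral, enorm_eq_nnnorm] using hfin
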